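/- arXiv:1306.6453 — 4 statements merged into one kernel-verified Lean document; each statement's English description precedes it below -/
import Mathlib

section
/- There exist constants C̄, R̄, H̄, c̄, ā₀, b̄₀ ∈ (0,∞) (depending on g and λ) such that the quadratic function ρ̄(q,p,u) := C̄(q² + p² + u²) + R̄·pq + gH̄·pu satisfies, for all (q,p,u) ∈ ℝ³: (i) ρ̄(q,p,u) ≥ c̄(q² + p² + u²), and (ii) (Lρ̄)(q,p,u) ≤ −ā₀·ρ̄(q,p,u) + b̄₀. -/
set_option maxHeartbeats 1000000
noncomputable section

/-- Configuration space `ℝ³` with coordinates `(q, p, u) = (x 0, x 1, x 2)`. -/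
abbrev Vec3 := Fin 3 → ℝ

/-- Partial derivative in the `i`-th coordinate direction. -/
noncomputable def pd3 (i : Fin 3) (f : Vec3 → ℝ) (x : Vec3) : ℝ :=
  fderiv ℝ f x (Pi.single i 1)

/-- The first order operator `B = p∂_q − q∂_p + g(u∂_p − p∂_u)`. -/
noncomputable def Bop (g : ℝ) (f : Vec3 → ℝ) (x : Vec3) : ℝ :=
  x 1 * pd3 0 f x - x 0 * pd3 1 f x + g * (x 2 * pd3 1 f x - x 1 * pd3 2 f x)

/-- The Markov generator `L = ∂_u² + B − λu∂_u`. -/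
noncomputable def Lop (g lam : ℝ) (f : Vec3 → ℝ) (x : Vec3) : ℝ :=
  pd3 2 (pd3 2 f) x + Bop g f x - lam * (x 2 * pd3 2 f x)

/-- The quadratic function `ρ̄(q,p,u) = C̄(q²+p²+u²) + R̄·pq + gH̄·pu`. -/
noncomputable def rhoBar (g C R H : ℝ) (w : Vec3) : ℝ :=
  C * (w 0 ^ 2 + w 1 ^ 2 + w 2 ^ 2) + R * (w 1 * w 0) + g * H * (w 1 * w 2)

noncomputable def proj3 (i : Fin 3) : Vec3 →L[ℝ] ℝ := ContinuousLinearMap.proj i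

lemma hcoord (i : Fin 3) (w : Vec3) : HasFDerivAt (fun v : Vec3 => v i) (proj3 i) w :=
  (proj3 i).hasFDerivAt

lemma hasFDerivAt_rhoBar (g C R H : ℝ) (w : Vec3) :
    HasFDerivAt (rhoBar g C R H)
      ((C * (2 * w 0) + R * w 1) • proj3 0
        + (C * (2 * w 1) + R * w 0 + g * H * w 2) • proj3 1
        + (C * (2 * w 2) + g * H * w 1) • proj3 2) w := by
  have h0 := hcoord 0 w
  have h1 := hcoord 1 w
  have h2 := hcoord 2 w
  have h := ((((h0.mul h0).add (h1.mul h1)).add (h2.mul h2)).const_mul C).add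
    (((h1.mul h0).const_mul R).add ((h1.mul h2).const_mul (g * H)))
  refine (h.congr_of_eventuallyEq (Filter.Eventually.of_forall fun v => ?_)).congr_fderiv ?_
  · simp [rhoBar]; ring
  · ext v
    simp [proj3, ContinuousLinearMap.proj]
    ring

lemma pd3_rhoBar0 (g C R H : ℝ) (w : Vec3) :
    pd3 0 (rhoBar g C R H) w = 2 * C * w 0 + R * w 1 := by
  rw [pd3, (hasFDerivAt_rhoBar g C R H w).fderiv]
  simp [proj3, Pi.single_apply]
  ring

lemma pd3_rhoBar1 (g C R H : ℝ) (w : Vec3) :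
    pd3 1 (rhoBar g C R H) w = 2 * C * w 1 + R * w 0 + g * H * w 2 := by
  rw [pd3, (hasFDerivAt_rhoBar g C R H w).fderiv]
  simp [proj3, Pi.single_apply]
  ring

lemma pd3_rhoBar2 (g C R H : ℝ) (w : Vec3) :
    pd3 2 (rhoBar g C R H) w = 2 * C * w 2 + g * H * w 1 := by
  rw [pd3, (hasFDerivAt_rhoBar g C R H w).fderiv]
  simp [proj3, Pi.single_apply]
  ring

lemma pd3_2_2_rhoBar (g C R H : ℝ) (w : Vec3) :
    pd3 2 (pd3 2 (rhoBar g C R H)) w = 2 * C := by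
  have hfun : pd3 2 (rhoBar g C R H) = fun v => 2 * C * v 2 + g * H * v 1 :=
    funext (pd3_rhoBar2 g C R H)
  rw [hfun, pd3]
  have h : HasFDerivAt (fun v : Vec3 => 2 * C * v 2 + g * H * v 1)
      ((2 * C) • proj3 2 + (g * H) • proj3 1) w :=
    ((hcoord 2 w).const_mul (2 * C)).add ((hcoord 1 w).const_mul (g * H))
  rw [h.fderiv]
  simp [proj3, Pi.single_apply]

lemma Lop_rhoBar (g lam C R H : ℝ) (w : Vec3) :
    Lop g lam (rhoBar g C R H) w =
      2 * C - R * w 0 ^ 2 + (R - g ^ 2 * H) * w 1 ^ 2 + (g ^ 2 * H - 2 * C * lam) * w 2 ^ 2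
        + g * (R - H) * (w 0 * w 2) - g * H * lam * (w 1 * w 2) := by
  rw [Lop, Bop, pd3_2_2_rhoBar, pd3_rhoBar0, pd3_rhoBar1, pd3_rhoBar2]
  ring

/-- There exist positive constants `C̄, R̄, H̄, c̄, ā₀, b̄₀` (depending on `g, λ`) such
that `ρ̄ ≥ c̄(q²+p²+u²)` and `Lρ̄ ≤ −ā₀ρ̄ + b̄₀` on `ℝ³`. -/
theorem langevin_lyapunov_function (g lam : ℝ) (hg : g ≠ 0) (hlam : 0 < lam) :
    ∃ C R H c a0 b0 : ℝ, 0 < C ∧ 0 < R ∧ 0 < H ∧ 0 < c ∧ 0 < a0 ∧ 0 < b0 ∧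
      (∀ w : Vec3, rhoBar g C R H w ≥ c * (w 0 ^ 2 + w 1 ^ 2 + w 2 ^ 2)) ∧
      (∀ w : Vec3, Lop g lam (rhoBar g C R H) w ≤ -a0 * rhoBar g C R H w + b0) := by
  set e : ℝ := g⁻¹ with he_def
  have he : g * e = 1 := mul_inv_cancel₀ hg
  set A : ℝ := (5/2 + (g - 2*e)^2 + 4*lam^2*e^2) / (2*lam) with hA_def
  have hA : 0 < A := by positivity
  set C : ℝ := A + 5/2 + e^2 with hC_def
  have hC : 0 < C := by positivity
  set M : ℝ := C + 3/2 + e^2 with hM_def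
  have hM : 0 < M := by positivity
  refine ⟨C, 1, 2*e^2, A + 1, 1/(2*M), 2*C, hC, one_pos, by positivity, by positivity,
    by positivity, by positivity, ?_, ?_⟩
  · intro w
    have hgH : g * (2*e^2) = 2*e := by
      have : g * (2*e^2) = 2*e*(g*e) := by ring
      rw [this, he]; ring
    rw [rhoBar, hgH]
    rw [hC_def]
    nlinarith [sq_nonneg (w 0 + w 1), sq_nonneg (e * w 1 + w 2), sq_nonneg e,
      sq_nonneg (w 0), sq_nonneg (w 1), sq_nonneg (w 2), hC_def, hA.le]
  · intro w
    have hgH : g * (2*e^2) = 2*e := by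
      have : g * (2*e^2) = 2*e*(g*e) := by ring
      rw [this, he]; ring
    have hg2H : g^2 * (2*e^2) = 2 := by
      have : g^2 * (2*e^2) = 2*(g*e)*(g*e) := by ring
      rw [this, he]; ring
    set S : ℝ := w 0 ^ 2 + w 1 ^ 2 + w 2 ^ 2 with hS_def
    have hC2 : 2*C*lam ≥ 5/2 + (g - 2*e)^2 + 4*lam^2*e^2 := by
      have hAe : A * (2*lam) = 5/2 + (g - 2*e)^2 + 4*lam^2*e^2 :=
        div_mul_cancel₀ _ (by positivity)
      nlinarith [sq_nonneg e, hlam]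
    -- Step 1: Lρ ≤ 2C - S/2
    have step1 : Lop g lam (rhoBar g C 1 (2*e^2)) w ≤ 2*C - S/2 := by
      rw [Lop_rhoBar]
      have h1 : g * (1 - 2*e^2) = g - 2*e := by
        have : g * (1 - 2*e^2) = g - 2*e*(g*e) := by ring
        rw [this, he]; ring
      have h2 : g * (2*e^2) * lam = 2*e*lam := by rw [hgH]
      rw [hg2H, h1, h2]
      nlinarith [sq_nonneg (w 0 / 2 - (g - 2*e) * w 2), sq_nonneg (w 1 / 2 + 2*e*lam*w 2),
        sq_nonneg (w 2), hC2]
    -- Step 2: ρ ≤ M * S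
    have step2 : rhoBar g C 1 (2*e^2) w ≤ M * S := by
      rw [rhoBar, hgH, hM_def, hC_def, hS_def]
      nlinarith [sq_nonneg (w 0 - w 1), sq_nonneg (e * w 1 - w 2), sq_nonneg e,
        sq_nonneg (w 0), sq_nonneg (w 1), sq_nonneg (w 2), hM_def, hC.le]
    -- Step 3
    have ha0M : (1/(2*M)) * M = 1/2 := by
      rw [div_mul_eq_mul_div, one_mul, div_eq_div_iff (by positivity) (by norm_num : (2:ℝ) ≠ 0)]; ring
    have h3 : (1/(2*M)) * rhoBar g C 1 (2*e^2) w ≤ S/2 := by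
      calc (1/(2*M)) * rhoBar g C 1 (2*e^2) w ≤ (1/(2*M)) * (M * S) := by
            apply mul_le_mul_of_nonneg_left step2 (by positivity)
        _ = S/2 := by rw [← mul_assoc, ha0M]; ring
    linarith
end
end

section
/- Under the stated commutation hypotheses, for every n ∈ ℕ and every multi-index 𝐤 = (k₁,…,k_n) ∈ {0,…,N+1}ⁿ, writing 𝒴_𝐤 := Y_{k₁}⋯Y_{k_n} and κ_𝐤 := Σ_{j=1}^n κ_{k_j}, the following operator identity holds on smooth functions: [𝒴_𝐤, L] = −λκ_𝐤 𝒴_𝐤 − Σ_{j : k_j ≥ 1} Y_{k₁}⋯Y_{k_{j−1}} Y_{k_j+1} Y_{k_{j+1}}⋯Y_{k_n} + 2 Σ_{j : k_j = 0} Y_{k₁}⋯Y_{k_{j−1}} Y₁Y₂ Y_{k_{j+1}}⋯Y_{k_n} (with the convention Y_{N+2} = 0). -/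
noncomputable section

/-- Operators on functions on `ℝ^m`. -/
abbrev OpM (m : ℕ) := ((Fin m → ℝ) → ℝ) → (Fin m → ℝ) → ℝ

/-- Partial derivative in the `i`-th coordinate direction. -/
noncomputable def pdM {m : ℕ} (i : Fin m) (f : (Fin m → ℝ) → ℝ) (x : Fin m → ℝ) : ℝ :=
  fderiv ℝ f x (Pi.single i 1)

/-- The first order operator `f ↦ ⟨V(x), ∇f(x)⟩` associated to a vector field `V`. -/
noncomputable def vecOp {m : ℕ} (V : (Fin m → ℝ) → Fin m → ℝ) : OpM m :=
  fun f x => ∑ j, V x j * pdM j f x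

/-- Commutator `[X,Y] = XY − YX` of operators. -/
def commOp {m : ℕ} (X Y : OpM m) : OpM m := fun f x => X (Y f) x - Y (X f) x

/-- The generator `L = Y₁² + Y₀ − λD` built from vector fields `V 0, V 1` and `W`. -/
noncomputable def Lgen {m : ℕ} (V : ℕ → (Fin m → ℝ) → Fin m → ℝ)
    (W : (Fin m → ℝ) → Fin m → ℝ) (lam : ℝ) : OpM m :=
  fun f x => vecOp (V 1) (vecOp (V 1) f) x + vecOp (V 0) f x - lam * vecOp W f x

/-- The composition `𝒴_𝐤 = Y_{k₁}⋯Y_{k_n}` indexed by a list of indices. -/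
noncomputable def Ycomp {m : ℕ} (V : ℕ → (Fin m → ℝ) → Fin m → ℝ) : List ℕ → OpM m
  | [] => fun f => f
  | i :: t => fun f => vecOp (V i) (Ycomp V t f)
section Aux

variable {m : ℕ}

lemma contDiff_pdM {f : (Fin m → ℝ) → ℝ} (hf : ContDiff ℝ (⊤ : ℕ∞) f) (i : Fin m) :
    ContDiff ℝ (⊤ : ℕ∞) (pdM i f) :=
  (hf.fderiv_right (by exact_mod_cast le_top)).clm_apply contDiff_const

lemma contDiff_vecOp {V : (Fin m → ℝ) → Fin m → ℝ} {f : (Fin m → ℝ) → ℝ}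
    (hV : ContDiff ℝ (⊤ : ℕ∞) V) (hf : ContDiff ℝ (⊤ : ℕ∞) f) :
    ContDiff ℝ (⊤ : ℕ∞) (vecOp V f) := by
  unfold vecOp
  exact ContDiff.sum fun j _ => (contDiff_pi.mp hV j).mul (contDiff_pdM hf j)

lemma pdM_congr {f g : (Fin m → ℝ) → ℝ} (h : f = g) (i : Fin m) : pdM i f = pdM i g := by
  rw [h]

lemma pdM_zero (i : Fin m) (x : Fin m → ℝ) : pdM i (fun _ => (0:ℝ)) x = 0 := by
  simp [pdM]

lemma pdM_add {f g : (Fin m → ℝ) → ℝ} {x : Fin m → ℝ} (hf : DifferentiableAt ℝ f x)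
    (hg : DifferentiableAt ℝ g x) (i : Fin m) :
    pdM i (fun y => f y + g y) x = pdM i f x + pdM i g x := by
  simp only [pdM, fderiv_fun_add hf hg, ContinuousLinearMap.add_apply]

lemma pdM_sub {f g : (Fin m → ℝ) → ℝ} {x : Fin m → ℝ} (hf : DifferentiableAt ℝ f x)
    (hg : DifferentiableAt ℝ g x) (i : Fin m) :
    pdM i (fun y => f y - g y) x = pdM i f x - pdM i g x := by
  simp only [pdM, fderiv_fun_sub hf hg, ContinuousLinearMap.sub_apply]

lemma pdM_const_mul {f : (Fin m → ℝ) → ℝ} {x : Fin m → ℝ} (hf : DifferentiableAt ℝ f x)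
    (c : ℝ) (i : Fin m) :
    pdM i (fun y => c * f y) x = c * pdM i f x := by
  simp only [pdM, fderiv_const_mul hf c, ContinuousLinearMap.smul_apply, smul_eq_mul]

lemma pdM_sum {ι : Type*} (s : Finset ι) {f : ι → (Fin m → ℝ) → ℝ} {x : Fin m → ℝ}
    (hf : ∀ j ∈ s, DifferentiableAt ℝ (f j) x) (i : Fin m) :
    pdM i (fun y => ∑ j ∈ s, f j y) x = ∑ j ∈ s, pdM i (f j) x := by
  simp only [pdM, fderiv_fun_sum hf, ContinuousLinearMap.sum_apply]

lemma vecOp_zero (V : (Fin m → ℝ) → Fin m → ℝ) (x : Fin m → ℝ) :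
    vecOp V (fun _ => (0:ℝ)) x = 0 := by
  simp [vecOp, pdM_zero]

lemma vecOp_zero_field (f : (Fin m → ℝ) → ℝ) (x : Fin m → ℝ) :
    vecOp (0 : (Fin m → ℝ) → Fin m → ℝ) f x = 0 := by
  simp [vecOp]

lemma vecOp_add {V : (Fin m → ℝ) → Fin m → ℝ} {f g : (Fin m → ℝ) → ℝ} {x : Fin m → ℝ}
    (hf : DifferentiableAt ℝ f x) (hg : DifferentiableAt ℝ g x) :
    vecOp V (fun y => f y + g y) x = vecOp V f x + vecOp V g x := by
  simp only [vecOp, pdM_add hf hg, mul_add, Finset.sum_add_distrib]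

lemma vecOp_sub {V : (Fin m → ℝ) → Fin m → ℝ} {f g : (Fin m → ℝ) → ℝ} {x : Fin m → ℝ}
    (hf : DifferentiableAt ℝ f x) (hg : DifferentiableAt ℝ g x) :
    vecOp V (fun y => f y - g y) x = vecOp V f x - vecOp V g x := by
  simp only [vecOp, pdM_sub hf hg, mul_sub, Finset.sum_sub_distrib]

lemma vecOp_const_mul {V : (Fin m → ℝ) → Fin m → ℝ} {f : (Fin m → ℝ) → ℝ} {x : Fin m → ℝ}
    (hf : DifferentiableAt ℝ f x) (c : ℝ) :
    vecOp V (fun y => c * f y) x = c * vecOp V f x := by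
  simp only [vecOp, pdM_const_mul hf, Finset.mul_sum]
  congr 1; funext j; ring

lemma vecOp_sum {ι : Type*} (s : Finset ι) {V : (Fin m → ℝ) → Fin m → ℝ}
    {f : ι → (Fin m → ℝ) → ℝ} {x : Fin m → ℝ}
    (hf : ∀ j ∈ s, DifferentiableAt ℝ (f j) x) :
    vecOp V (fun y => ∑ j ∈ s, f j y) x = ∑ j ∈ s, vecOp V (f j) x := by
  simp only [vecOp, pdM_sum s hf, Finset.mul_sum]
  exact Finset.sum_comm

lemma contDiff_Ycomp {V : ℕ → (Fin m → ℝ) → Fin m → ℝ} (hV : ∀ i, ContDiff ℝ (⊤ : ℕ∞) (V i))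
    {f : (Fin m → ℝ) → ℝ} (hf : ContDiff ℝ (⊤ : ℕ∞) f) :
    ∀ l : List ℕ, ContDiff ℝ (⊤ : ℕ∞) (Ycomp V l f)
  | [] => hf
  | i :: t => contDiff_vecOp (hV i) (contDiff_Ycomp hV hf t)

lemma contDiff_Lgen {V : ℕ → (Fin m → ℝ) → Fin m → ℝ} (hV : ∀ i, ContDiff ℝ (⊤ : ℕ∞) (V i))
    {W : (Fin m → ℝ) → Fin m → ℝ} (hW : ContDiff ℝ (⊤ : ℕ∞) W)
    {f : (Fin m → ℝ) → ℝ} (hf : ContDiff ℝ (⊤ : ℕ∞) f) (lam : ℝ) :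
    ContDiff ℝ (⊤ : ℕ∞) (Lgen V W lam f) := by
  unfold Lgen
  exact ((contDiff_vecOp (hV 1) (contDiff_vecOp (hV 1) hf)).add
    (contDiff_vecOp (hV 0) hf)).sub (contDiff_const.mul (contDiff_vecOp hW hf))

end Aux
section Aux2

variable {m N : ℕ} {κ : ℕ → ℝ} {V : ℕ → (Fin m → ℝ) → Fin m → ℝ}
  {W : (Fin m → ℝ) → Fin m → ℝ} {lam : ℝ}

lemma diffAt {f : (Fin m → ℝ) → ℝ} (hf : ContDiff ℝ (⊤ : ℕ∞) f) (x : Fin m → ℝ) :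
    DifferentiableAt ℝ f x :=
  (hf.differentiable (by simp)).differentiableAt

lemma vecOp_zero_fun (f : (Fin m → ℝ) → ℝ) :
    vecOp (0 : (Fin m → ℝ) → Fin m → ℝ) f = fun _ => 0 :=
  funext fun x => vecOp_zero_field f x

lemma comm0 (hVz : ∀ i, N + 1 < i → V i = 0)
    (h1 : ∀ j, 1 ≤ j → j ≤ N → ∀ f : (Fin m → ℝ) → ℝ, ContDiff ℝ (⊤ : ℕ∞) f →
      ∀ x, commOp (vecOp (V 0)) (vecOp (V j)) f x = vecOp (V (j + 1)) f x)
    (h2 : ∀ f : (Fin m → ℝ) → ℝ, ContDiff ℝ (⊤ : ℕ∞) f →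
      ∀ x, commOp (vecOp (V 0)) (vecOp (V (N + 1))) f x = 0) :
    ∀ j, 1 ≤ j → j ≤ N + 1 → ∀ f : (Fin m → ℝ) → ℝ, ContDiff ℝ (⊤ : ℕ∞) f →
      ∀ x, commOp (vecOp (V 0)) (vecOp (V j)) f x = vecOp (V (j + 1)) f x := by
  intro j hj1 hj2 f hf x
  rcases Nat.lt_or_ge j (N + 1) with h | h
  · exact h1 j hj1 (by omega) f hf x
  · have hj : j = N + 1 := by omega
    subst hj
    rw [h2 f hf x, hVz (N + 2) (by omega), vecOp_zero_field]

lemma commY21 (hVs : ∀ i, ContDiff ℝ (⊤ : ℕ∞) (V i))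
    (hVz : ∀ i, N + 1 < i → V i = 0)
    (h3 : ∀ i j, 1 ≤ i → i ≤ N + 1 → 1 ≤ j → j ≤ N + 1 →
      ∀ f : (Fin m → ℝ) → ℝ, ContDiff ℝ (⊤ : ℕ∞) f →
      ∀ x, commOp (vecOp (V i)) (vecOp (V j)) f x = 0) :
    ∀ f : (Fin m → ℝ) → ℝ, ContDiff ℝ (⊤ : ℕ∞) f → ∀ x,
      vecOp (V 2) (vecOp (V 1) f) x = vecOp (V 1) (vecOp (V 2) f) x := by
  intro f hf x
  rcases Nat.eq_zero_or_pos N with hN | hN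
  · have h2z : V 2 = 0 := hVz 2 (by omega)
    rw [h2z, vecOp_zero_field, vecOp_zero_fun, vecOp_zero]
  · have := h3 2 1 (by omega) (by omega) (by omega) (by omega) f hf x
    simp only [commOp] at this
    linarith

lemma single_comm (hVs : ∀ i, ContDiff ℝ (⊤ : ℕ∞) (V i))
    (hVz : ∀ i, N + 1 < i → V i = 0) (hWs : ContDiff ℝ (⊤ : ℕ∞) W)
    (h1 : ∀ j, 1 ≤ j → j ≤ N → ∀ f : (Fin m → ℝ) → ℝ, ContDiff ℝ (⊤ : ℕ∞) f →
      ∀ x, commOp (vecOp (V 0)) (vecOp (V j)) f x = vecOp (V (j + 1)) f x)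
    (h2 : ∀ f : (Fin m → ℝ) → ℝ, ContDiff ℝ (⊤ : ℕ∞) f →
      ∀ x, commOp (vecOp (V 0)) (vecOp (V (N + 1))) f x = 0)
    (h3 : ∀ i j, 1 ≤ i → i ≤ N + 1 → 1 ≤ j → j ≤ N + 1 →
      ∀ f : (Fin m → ℝ) → ℝ, ContDiff ℝ (⊤ : ℕ∞) f →
      ∀ x, commOp (vecOp (V i)) (vecOp (V j)) f x = 0)
    (h4 : ∀ i ≤ N + 1, ∀ f : (Fin m → ℝ) → ℝ, ContDiff ℝ (⊤ : ℕ∞) f →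
      ∀ x, commOp (vecOp (V i)) (vecOp W) f x = κ i * vecOp (V i) f x)
    (a : ℕ) (ha : a ≤ N + 1) (f : (Fin m → ℝ) → ℝ) (hf : ContDiff ℝ (⊤ : ℕ∞) f)
    (x : Fin m → ℝ) :
    commOp (vecOp (V a)) (Lgen V W lam) f x
      = -(lam * κ a) * vecOp (V a) f x
        - (if 1 ≤ a then vecOp (V (a + 1)) f x else 0)
        + 2 * (if a = 0 then vecOp (V 1) (vecOp (V 2) f) x else 0) := by
  have s1 : ContDiff ℝ (⊤ : ℕ∞) (vecOp (V 1) f) := contDiff_vecOp (hVs 1) hf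
  have s11 : ContDiff ℝ (⊤ : ℕ∞) (vecOp (V 1) (vecOp (V 1) f)) := contDiff_vecOp (hVs 1) s1
  have s0 : ContDiff ℝ (⊤ : ℕ∞) (vecOp (V 0) f) := contDiff_vecOp (hVs 0) hf
  have sW : ContDiff ℝ (⊤ : ℕ∞) (vecOp W f) := contDiff_vecOp hWs hf
  have e1 : vecOp (V a) (Lgen V W lam f) x
      = vecOp (V a) (vecOp (V 1) (vecOp (V 1) f)) x + vecOp (V a) (vecOp (V 0) f) x
        - lam * vecOp (V a) (vecOp W f) x := by
    have hL : Lgen V W lam f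
        = fun y => (vecOp (V 1) (vecOp (V 1) f) y + vecOp (V 0) f y) - lam * vecOp W f y := rfl
    rw [hL, vecOp_sub ((diffAt s11 x).fun_add (diffAt s0 x)) ((diffAt sW x).const_mul lam),
      vecOp_add (diffAt s11 x) (diffAt s0 x), vecOp_const_mul (diffAt sW x)]
  have eW := h4 a ha f hf x
  simp only [commOp] at eW
  have e0 : vecOp (V a) (vecOp (V 0) f) x - vecOp (V 0) (vecOp (V a) f) x
      = -(if 1 ≤ a then vecOp (V (a + 1)) f x else 0) := by
    rcases Nat.eq_zero_or_pos a with h | h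
    · subst h; simp
    · rw [if_pos (show 1 ≤ a from h)]
      have := comm0 hVz h1 h2 a h ha f hf x
      simp only [commOp] at this
      linarith
  have e2 : vecOp (V a) (vecOp (V 1) (vecOp (V 1) f)) x
        - vecOp (V 1) (vecOp (V 1) (vecOp (V a) f)) x
      = 2 * (if a = 0 then vecOp (V 1) (vecOp (V 2) f) x else 0) := by
    rcases Nat.eq_zero_or_pos a with h | h
    · subst h; rw [if_pos rfl]
      have c1 := comm0 hVz h1 h2 1 le_rfl (by omega) (vecOp (V 1) f) s1 x
      simp only [commOp] at c1
      have c2 : vecOp (V 0) (vecOp (V 1) f)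
          = fun y => vecOp (V 1) (vecOp (V 0) f) y + vecOp (V 2) f y := by
        funext y
        have := comm0 hVz h1 h2 1 le_rfl (by omega) f hf y
        simp only [commOp] at this
        linarith
      have c3 : vecOp (V 1) (vecOp (V 0) (vecOp (V 1) f)) x
          = vecOp (V 1) (vecOp (V 1) (vecOp (V 0) f)) x + vecOp (V 1) (vecOp (V 2) f) x := by
        rw [c2, vecOp_add (diffAt (contDiff_vecOp (hVs 1) s0) x)
          (diffAt (contDiff_vecOp (hVs 2) hf) x)]
      have c4 := commY21 hVs hVz h3 f hf x
      linarith
    · rw [if_neg (show ¬ a = 0 by omega)]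
      have c1 := h3 a 1 h ha le_rfl (by omega) (vecOp (V 1) f) s1 x
      simp only [commOp] at c1
      have c2 : vecOp (V a) (vecOp (V 1) f) = vecOp (V 1) (vecOp (V a) f) := by
        funext y
        have := h3 a 1 h ha le_rfl (by omega) f hf y
        simp only [commOp] at this
        linarith
      rw [c2] at c1
      linarith
  simp only [commOp, Lgen]
  linear_combination e1 + e2 + e0 - lam * eW

end Aux2
section Aux3

variable {m N : ℕ} {κ : ℕ → ℝ} {V : ℕ → (Fin m → ℝ) → Fin m → ℝ}
  {W : (Fin m → ℝ) → Fin m → ℝ} {lam : ℝ}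

lemma vecOp_ite (V' : (Fin m → ℝ) → Fin m → ℝ) (c : Prop) [Decidable c]
    (F : (Fin m → ℝ) → ℝ) (x : Fin m → ℝ) :
    vecOp V' (fun y => if c then F y else 0) x = if c then vecOp V' F x else 0 := by
  split_ifs with h
  · rfl
  · exact vecOp_zero V' x

lemma contDiff_ite0 (c : Prop) [Decidable c] {F : (Fin m → ℝ) → ℝ}
    (hF : ContDiff ℝ (⊤ : ℕ∞) F) :
    ContDiff ℝ (⊤ : ℕ∞) (fun y => if c then F y else 0) := by
  split_ifs with h
  · exact hF
  · exact contDiff_const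

lemma list_comm (hVs : ∀ i, ContDiff ℝ (⊤ : ℕ∞) (V i))
    (hVz : ∀ i, N + 1 < i → V i = 0) (hWs : ContDiff ℝ (⊤ : ℕ∞) W)
    (h1 : ∀ j, 1 ≤ j → j ≤ N → ∀ f : (Fin m → ℝ) → ℝ, ContDiff ℝ (⊤ : ℕ∞) f →
      ∀ x, commOp (vecOp (V 0)) (vecOp (V j)) f x = vecOp (V (j + 1)) f x)
    (h2 : ∀ f : (Fin m → ℝ) → ℝ, ContDiff ℝ (⊤ : ℕ∞) f →
      ∀ x, commOp (vecOp (V 0)) (vecOp (V (N + 1))) f x = 0)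
    (h3 : ∀ i j, 1 ≤ i → i ≤ N + 1 → 1 ≤ j → j ≤ N + 1 →
      ∀ f : (Fin m → ℝ) → ℝ, ContDiff ℝ (⊤ : ℕ∞) f →
      ∀ x, commOp (vecOp (V i)) (vecOp (V j)) f x = 0)
    (h4 : ∀ i ≤ N + 1, ∀ f : (Fin m → ℝ) → ℝ, ContDiff ℝ (⊤ : ℕ∞) f →
      ∀ x, commOp (vecOp (V i)) (vecOp W) f x = κ i * vecOp (V i) f x) :
    ∀ l : List ℕ, (∀ a ∈ l, a ≤ N + 1) →
    ∀ f : (Fin m → ℝ) → ℝ, ContDiff ℝ (⊤ : ℕ∞) f → ∀ x,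
      commOp (Ycomp V l) (Lgen V W lam) f x
        = -(lam * (l.map κ).sum) * Ycomp V l f x
          - (∑ j : Fin l.length, if 1 ≤ l.get j then
              Ycomp V (l.set (j : ℕ) (l.get j + 1)) f x else 0)
          + 2 * ∑ j : Fin l.length, (if l.get j = 0 then
              Ycomp V (l.take (j : ℕ) ++ [1, 2] ++ l.drop ((j : ℕ) + 1)) f x else 0) := by
  intro l
  induction l with
  | nil =>
    intro _ f hf x
    simp [commOp, Ycomp]
  | cons a t IH =>
    intro hl f hf x
    have ha : a ≤ N + 1 := hl a List.mem_cons_self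
    have hlt : ∀ b ∈ t, b ≤ N + 1 := fun b hb => hl b (List.mem_cons_of_mem a hb)
    have sY : ∀ l' : List ℕ, ContDiff ℝ (⊤ : ℕ∞) (Ycomp V l' f) :=
      fun l' => contDiff_Ycomp hVs hf l'
    have sg : ContDiff ℝ (⊤ : ℕ∞) (Ycomp V t f) := sY t
    have sLf : ContDiff ℝ (⊤ : ℕ∞) (Lgen V W lam f) := contDiff_Lgen hVs hWs hf lam
    have sLg : ContDiff ℝ (⊤ : ℕ∞) (Lgen V W lam (Ycomp V t f)) :=
      contDiff_Lgen hVs hWs sg lam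
    have scf : ContDiff ℝ (⊤ : ℕ∞) (commOp (Ycomp V t) (Lgen V W lam) f) := by
      have : commOp (Ycomp V t) (Lgen V W lam) f
          = fun y => Ycomp V t (Lgen V W lam f) y - Lgen V W lam (Ycomp V t f) y := rfl
      rw [this]
      exact (contDiff_Ycomp hVs sLf t).sub sLg
    -- split the commutator
    have E3 : commOp (Ycomp V (a :: t)) (Lgen V W lam) f x
        = vecOp (V a) (commOp (Ycomp V t) (Lgen V W lam) f) x
          + commOp (vecOp (V a)) (Lgen V W lam) (Ycomp V t f) x := by
      have hsplit : Ycomp V t (Lgen V W lam f)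
          = fun y => commOp (Ycomp V t) (Lgen V W lam) f y
              + Lgen V W lam (Ycomp V t f) y := by
        funext y; simp only [commOp]; ring
      show vecOp (V a) (Ycomp V t (Lgen V W lam f)) x
          - Lgen V W lam (vecOp (V a) (Ycomp V t f)) x = _
      rw [hsplit, vecOp_add (diffAt scf x) (diffAt sLg x)]
      simp only [commOp]
      ring
    have E2 := single_comm (lam := lam) hVs hVz hWs h1 h2 h3 h4 a ha (Ycomp V t f) sg x
    -- expand vecOp (V a) of the IH expression
    have hIH : commOp (Ycomp V t) (Lgen V W lam) f
        = fun y => -(lam * (t.map κ).sum) * Ycomp V t f y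
            - (∑ j : Fin t.length, if 1 ≤ t.get j then
                Ycomp V (t.set (j : ℕ) (t.get j + 1)) f y else 0)
            + 2 * ∑ j : Fin t.length, (if t.get j = 0 then
                Ycomp V (t.take (j : ℕ) ++ [1, 2] ++ t.drop ((j : ℕ) + 1)) f y else 0) :=
      funext fun y => IH hlt f hf y
    have d1 : DifferentiableAt ℝ (fun y => ∑ j : Fin t.length, if 1 ≤ t.get j then
        Ycomp V (t.set (j : ℕ) (t.get j + 1)) f y else 0) x :=
      diffAt (ContDiff.sum fun j _ => contDiff_ite0 _ (sY _)) x
    have d2 : DifferentiableAt ℝ (fun y => ∑ j : Fin t.length, if t.get j = 0 then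
        Ycomp V (t.take (j : ℕ) ++ [1, 2] ++ t.drop ((j : ℕ) + 1)) f y else 0) x :=
      diffAt (ContDiff.sum fun j _ => contDiff_ite0 _ (sY _)) x
    have E1 : vecOp (V a) (commOp (Ycomp V t) (Lgen V W lam) f) x
        = -(lam * (t.map κ).sum) * Ycomp V (a :: t) f x
          - (∑ j : Fin t.length, if 1 ≤ t.get j then
              Ycomp V (a :: t.set (j : ℕ) (t.get j + 1)) f x else 0)
          + 2 * ∑ j : Fin t.length, (if t.get j = 0 then
              Ycomp V (a :: (t.take (j : ℕ) ++ [1, 2] ++ t.drop ((j : ℕ) + 1))) f x else 0) := by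
      rw [hIH]
      rw [vecOp_add (((diffAt sg x).const_mul _).fun_sub d1) (d2.const_mul 2),
        vecOp_sub ((diffAt sg x).const_mul _) d1,
        vecOp_const_mul (diffAt sg x), vecOp_const_mul d2,
        vecOp_sum _ (fun j _ => diffAt (contDiff_ite0 _ (sY _)) x),
        vecOp_sum _ (fun j _ => diffAt (contDiff_ite0 _ (sY _)) x)]
      simp only [vecOp_ite]
      rfl
    rw [E3, E1, E2]
    simp only [List.length_cons, Fin.sum_univ_succ, List.get_eq_getElem, List.getElem_cons_zero, List.getElem_cons_succ, List.append_eq,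
      Fin.val_zero, Fin.val_succ, List.set_cons_zero, List.set_cons_succ,
      List.take_succ_cons, List.take_zero, List.drop_succ_cons, List.drop_zero,
      List.nil_append, List.cons_append, List.map_cons, List.sum_cons, Ycomp]
    ring

end Aux3
lemma ofFn_set_eq_update {n : ℕ} (k : Fin n → ℕ) (j : Fin n) (v : ℕ) :
    (List.ofFn k).set (j : ℕ) v = List.ofFn (Function.update k j v) := by
  apply List.ext_getElem
  · simp
  · intro i h1 h2
    simp only [List.getElem_set, List.getElem_ofFn, Function.update_apply]
    have h2' : i < n := by simpa using h2
    by_cases hij : (j : ℕ) = i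
    · rw [if_pos hij, if_pos (by exact Fin.ext (by simp [hij]))]
    · rw [if_neg hij, if_neg (by intro h; exact hij (by simp [← h]))]

/-- Under the filiform commutation relations, for any multi-index `𝐤 ∈ {0,…,N+1}ⁿ`,
`[𝒴_𝐤, L] = −λκ_𝐤𝒴_𝐤 − Σ_{j : k_j ≥ 1} Y_{k₁}⋯Y_{k_j+1}⋯Y_{k_n}
 + 2Σ_{j : k_j = 0} Y_{k₁}⋯Y_{k_{j-1}}Y₁Y₂Y_{k_{j+1}}⋯Y_{k_n}` (with `Y_{N+2} = 0`). -/
theorem filiform_multiindex_commutator (m N : ℕ) (κ : ℕ → ℝ)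
    (hκ : ∀ i ≤ N + 1, 0 < κ i)
    (V : ℕ → (Fin m → ℝ) → Fin m → ℝ) (hVs : ∀ i, ContDiff ℝ (⊤ : ℕ∞) (V i))
    (hVz : ∀ i, N + 1 < i → V i = 0)
    (W : (Fin m → ℝ) → Fin m → ℝ) (hWs : ContDiff ℝ (⊤ : ℕ∞) W)
    (lam : ℝ) (hlam : 0 < lam)
    (h1 : ∀ j, 1 ≤ j → j ≤ N → ∀ f : (Fin m → ℝ) → ℝ, ContDiff ℝ (⊤ : ℕ∞) f →
      ∀ x, commOp (vecOp (V 0)) (vecOp (V j)) f x = vecOp (V (j + 1)) f x)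
    (h2 : ∀ f : (Fin m → ℝ) → ℝ, ContDiff ℝ (⊤ : ℕ∞) f →
      ∀ x, commOp (vecOp (V 0)) (vecOp (V (N + 1))) f x = 0)
    (h3 : ∀ i j, 1 ≤ i → i ≤ N + 1 → 1 ≤ j → j ≤ N + 1 →
      ∀ f : (Fin m → ℝ) → ℝ, ContDiff ℝ (⊤ : ℕ∞) f →
      ∀ x, commOp (vecOp (V i)) (vecOp (V j)) f x = 0)
    (h4 : ∀ i ≤ N + 1, ∀ f : (Fin m → ℝ) → ℝ, ContDiff ℝ (⊤ : ℕ∞) f →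
      ∀ x, commOp (vecOp (V i)) (vecOp W) f x = κ i * vecOp (V i) f x)
    (n : ℕ) (k : Fin n → ℕ) (hk : ∀ j, k j ≤ N + 1) :
    ∀ f : (Fin m → ℝ) → ℝ, ContDiff ℝ (⊤ : ℕ∞) f → ∀ x,
      commOp (Ycomp V (List.ofFn k)) (Lgen V W lam) f x
        = -(lam * ∑ j, κ (k j)) * Ycomp V (List.ofFn k) f x
          - (∑ j : Fin n, if 1 ≤ k j then
              Ycomp V (List.ofFn (Function.update k j (k j + 1))) f x else 0)
          + 2 * ∑ j : Fin n, (if k j = 0 then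
              Ycomp V ((List.ofFn k).take (j : ℕ) ++ [1, 2]
                ++ (List.ofFn k).drop ((j : ℕ) + 1)) f x else 0) := by

  intro f hf x
  have hlen : (List.ofFn k).length = n := List.length_ofFn
  have hl : ∀ a ∈ List.ofFn k, a ≤ N + 1 := by
    intro a hain
    obtain ⟨j, hj⟩ := List.mem_ofFn.mp hain
    exact hj ▸ hk j
  have key := list_comm (lam := lam) hVs hVz hWs h1 h2 h3 h4 (List.ofFn k) hl f hf x
  rw [key]
  have esum : ((List.ofFn k).map κ).sum = ∑ j, κ (k j) := by
    rw [List.map_ofFn, List.sum_ofFn]; rfl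
  have e1 : (∑ j : Fin (List.ofFn k).length, if 1 ≤ (List.ofFn k).get j then
        Ycomp V ((List.ofFn k).set (j : ℕ) ((List.ofFn k).get j + 1)) f x else 0)
      = ∑ j : Fin n, if 1 ≤ k j then
          Ycomp V (List.ofFn (Function.update k j (k j + 1))) f x else 0 := by
    rw [← Fin.sum_congr' (fun j : Fin n => if 1 ≤ k j then
      Ycomp V (List.ofFn (Function.update k j (k j + 1))) f x else 0) hlen]
    apply Finset.sum_congr rfl
    intro j _
    have hg : (List.ofFn k).get j = k (Fin.cast hlen j) := by
      simp [List.get_ofFn]; rfl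
    rw [hg]
    have : (List.ofFn k).set (j : ℕ) (k (Fin.cast hlen j) + 1)
        = List.ofFn (Function.update k (Fin.cast hlen j) (k (Fin.cast hlen j) + 1)) := by
      rw [← ofFn_set_eq_update k (Fin.cast hlen j)]
      simp
    rw [this]
  have e2 : (∑ j : Fin (List.ofFn k).length, if (List.ofFn k).get j = 0 then
        Ycomp V ((List.ofFn k).take (j : ℕ) ++ [1, 2] ++ (List.ofFn k).drop ((j : ℕ) + 1)) f x else 0)
      = ∑ j : Fin n, if k j = 0 then
          Ycomp V ((List.ofFn k).take (j : ℕ) ++ [1, 2] ++ (List.ofFn k).drop ((j : ℕ) + 1)) f x else 0 := by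
    rw [← Fin.sum_congr' (fun j : Fin n => if k j = 0 then
      Ycomp V ((List.ofFn k).take (j : ℕ) ++ [1, 2] ++ (List.ofFn k).drop ((j : ℕ) + 1)) f x else 0) hlen]
    apply Finset.sum_congr rfl
    intro j _
    have hg : (List.ofFn k).get j = k (Fin.cast hlen j) := by
      simp [List.get_ofFn]; rfl
    rw [hg]
    simp
  rw [esum, e1, e2]
end
end

section
/- Let λ ≥ 0, ε ∈ ℝ and let f : (0,∞) × ℝ → ℝ be smooth with ∂_t f(t,·) = L f(t,·). Then pointwise on (0,∞) × ℝ: ∂_t((∂_x f)²) − L((∂_x f)²) = −2(x∂_x²f − ∂_x f)² − 2(λ−1)(∂_x f)². Consequently, for λ > 1, ∂_t(e^{2(λ−1)t}(∂_x f)²) − L(e^{2(λ−1)t}(∂_x f)²) ≤ 0 (the pointwise form of the gradient bound |∂_x f_t|² ≤ e^{−2(λ−1)t}P_t|∂_x f₀|²). -/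
noncomputable section

/-- The B-S generator `(Lg)(x) = x²g''(x) + εg'(x) − λxg'(x)`. -/
noncomputable def BSgen (lam eps : ℝ) (g : ℝ → ℝ) (x : ℝ) : ℝ :=
  x ^ 2 * deriv (deriv g) x + eps * deriv g x - lam * x * deriv g x

private lemma two_le_top' : (2 : WithTop ℕ∞) ≤ ((⊤:ℕ∞) : WithTop ℕ∞) := by norm_cast

/-- Gradient bound for the B-S model in pointwise form: along any smooth solution of
`∂_t f = Lf` on `(0,∞) × ℝ`,
`∂_t((∂_x f)²) − L((∂_x f)²) = −2(x∂_x²f − ∂_x f)² − 2(λ−1)(∂_x f)²`, and for `λ > 1`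
`∂_t(e^{2(λ−1)t}(∂_x f)²) − L(e^{2(λ−1)t}(∂_x f)²) ≤ 0`. -/
theorem BS_gradient_bound (lam eps : ℝ) (hlam : 0 ≤ lam)
    (f : ℝ → ℝ → ℝ)
    (hf : ContDiffOn ℝ (⊤ : ℕ∞) (fun p : ℝ × ℝ => f p.1 p.2)
      (Set.Ioi (0 : ℝ) ×ˢ (Set.univ : Set ℝ)))
    (heq : ∀ t : ℝ, 0 < t → ∀ x : ℝ, deriv (fun s => f s x) t = BSgen lam eps (f t) x) :
    ∀ t : ℝ, 0 < t → ∀ x : ℝ,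
      (deriv (fun s => (deriv (f s) x) ^ 2) t
          - BSgen lam eps (fun y => (deriv (f t) y) ^ 2) x
        = -2 * (x * deriv (deriv (f t)) x - deriv (f t) x) ^ 2
          - 2 * (lam - 1) * (deriv (f t) x) ^ 2) ∧
      (1 < lam →
        deriv (fun s => Real.exp (2 * (lam - 1) * s) * (deriv (f s) x) ^ 2) t
            - BSgen lam eps
                (fun y => Real.exp (2 * (lam - 1) * t) * (deriv (f t) y) ^ 2) x
          ≤ 0) := by
  intro t ht x
  set g : ℝ × ℝ → ℝ := fun p => f p.1 p.2 with hgdef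
  have hUo : IsOpen (Set.Ioi (0:ℝ) ×ˢ (Set.univ : Set ℝ)) := isOpen_Ioi.prod isOpen_univ
  have hgA : ∀ s y : ℝ, 0 < s → ContDiffAt ℝ (⊤:ℕ∞) g (s, y) := fun s y hs =>
    hf.contDiffAt (hUo.mem_nhds (by simp [hs]))
  set D : ℝ × ℝ → (ℝ × ℝ) →L[ℝ] ℝ := fderiv ℝ g with hDdef
  have hD : ∀ s y : ℝ, 0 < s → ContDiffAt ℝ (⊤:ℕ∞) D (s, y) := fun s y hs =>
    (hgA s y hs).fderiv_right (by norm_cast)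
  -- slice smoothness
  have hslice : ∀ s : ℝ, 0 < s → ContDiff ℝ (⊤:ℕ∞) (f s) := by
    intro s hs
    rw [contDiff_iff_contDiffAt]
    intro y
    have : ContDiffAt ℝ (⊤:ℕ∞) (fun y : ℝ => g (s, y)) y :=
      (hgA s y hs).comp y (contDiffAt_const.prodMk contDiffAt_id)
    exact this
  -- partial derivative in x
  have hdx : ∀ s y : ℝ, 0 < s → HasDerivAt (f s) (D (s, y) (0, 1)) y := by
    intro s y hs
    have h1 : HasFDerivAt g (D (s, y)) (s, y) :=
      (((hgA s y hs)).differentiableAt (by norm_cast)).hasFDerivAt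
    have h2 : HasDerivAt (fun y : ℝ => ((s : ℝ), y)) ((0 : ℝ), (1 : ℝ)) y :=
      (hasDerivAt_const y s).prodMk (hasDerivAt_id y)
    exact h1.comp_hasDerivAt y h2
  -- partial derivative in t
  have hdt : ∀ s y : ℝ, 0 < s → HasDerivAt (fun r => f r y) (D (s, y) (1, 0)) s := by
    intro s y hs
    have h1 : HasFDerivAt g (D (s, y)) (s, y) :=
      (((hgA s y hs)).differentiableAt (by norm_cast)).hasFDerivAt
    have h2 : HasDerivAt (fun r : ℝ => (r, (y : ℝ))) ((1 : ℝ), (0 : ℝ)) s :=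
      (hasDerivAt_id s).prodMk (hasDerivAt_const s y)
    exact h1.comp_hasDerivAt s h2
  -- differentiability / fderiv of p ↦ D p v
  have hDv : ∀ (v : ℝ × ℝ) (s y : ℝ), 0 < s →
      HasFDerivAt (fun p => D p v) ((fderiv ℝ D (s, y)).flip v) (s, y) := by
    intro v s y hs
    have hc : DifferentiableAt ℝ D (s, y) :=
      (hD s y hs).differentiableAt (by norm_cast)
    have := hc.hasFDerivAt.clm_apply (hasFDerivAt_const v (s, y))
    simpa using this
  -- mixed second derivative, t then x direction
  have hmix1 : HasDerivAt (fun s => D (s, x) (0, 1)) (fderiv ℝ D (t, x) (1, 0) (0, 1)) t := by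
    have h2 : HasDerivAt (fun r : ℝ => (r, (x : ℝ))) ((1 : ℝ), (0 : ℝ)) t :=
      (hasDerivAt_id t).prodMk (hasDerivAt_const t x)
    have := (hDv (0, 1) t x ht).comp_hasDerivAt t h2
    exact this
  have hmix2 : HasDerivAt (fun y => D (t, y) (1, 0)) (fderiv ℝ D (t, x) (0, 1) (1, 0)) x := by
    have h2 : HasDerivAt (fun y : ℝ => ((t : ℝ), y)) ((0 : ℝ), (1 : ℝ)) x :=
      (hasDerivAt_const x t).prodMk (hasDerivAt_id x)
    have := (hDv (1, 0) t x ht).comp_hasDerivAt x h2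
    exact this
  have hsymm : fderiv ℝ D (t, x) (1, 0) (0, 1) = fderiv ℝ D (t, x) (0, 1) (1, 0) :=
    (hgA t x ht).isSymmSndFDerivAt (by rw [minSmoothness_of_isRCLikeNormedField]; exact two_le_top') (1, 0) (0, 1)
  -- the time derivative of s ↦ ∂ₓf(s,x)
  have hu : HasDerivAt (fun s => deriv (f s) x) (fderiv ℝ D (t, x) (0, 1) (1, 0)) t := by
    rw [← hsymm]
    apply hmix1.congr_of_eventuallyEq
    filter_upwards [Ioi_mem_nhds ht] with s hs
    exact (hdx s x hs).deriv
  -- identify the value of the time derivative with the x-derivative of BSgen (f t)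
  have hKval : HasDerivAt (BSgen lam eps (f t)) (fderiv ℝ D (t, x) (0, 1) (1, 0)) x := by
    apply hmix2.congr_of_eventuallyEq
    apply Filter.Eventually.of_forall
    intro y
    rw [← heq t ht y]
    exact (hdt t y ht).deriv
  -- slice notation
  set φ := f t with hφdef
  have hφ : ContDiff ℝ (⊤:ℕ∞) φ := hslice t ht
  have hφ' : ContDiff ℝ (⊤:ℕ∞) (deriv φ) := (contDiff_infty_iff_deriv.mp hφ).2
  have hφ'' : ContDiff ℝ (⊤:ℕ∞) (deriv (deriv φ)) := (contDiff_infty_iff_deriv.mp hφ').2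
  set a := deriv φ x with hadef
  set b := deriv (deriv φ) x with hbdef
  set c := deriv (deriv (deriv φ)) x with hcdef
  have hda : ∀ y, HasDerivAt φ (deriv φ y) y := fun y =>
    ((hφ.differentiable (by norm_cast)) y).hasDerivAt
  have hdb : ∀ y, HasDerivAt (deriv φ) (deriv (deriv φ) y) y := fun y =>
    ((hφ'.differentiable (by norm_cast)) y).hasDerivAt
  have hdc : ∀ y, HasDerivAt (deriv (deriv φ)) (deriv (deriv (deriv φ)) y) y := fun y =>
    ((hφ''.differentiable (by norm_cast)) y).hasDerivAt
  -- compute deriv of BSgen φ at x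
  have hB : HasDerivAt (BSgen lam eps φ)
      (2 * x * b + x ^ 2 * c + eps * b - (lam * a + lam * x * b)) x := by
    have h1 : HasDerivAt (fun y : ℝ => y ^ 2 * deriv (deriv φ) y)
        (2 * x * b + x ^ 2 * c) x := by
      have := (hasDerivAt_pow 2 x).fun_mul (hdc x)
      convert this using 1
      · rfl
      · rfl
      push_cast
      ring
    have h2 : HasDerivAt (fun y : ℝ => eps * deriv φ y) (eps * b) x := (hdb x).const_mul eps
    have h3 : HasDerivAt (fun y : ℝ => lam * y * deriv φ y) (lam * a + lam * x * b) x := by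
      have := ((hasDerivAt_id x).const_mul lam).fun_mul (hdb x)
      convert this using 1
      · rfl
      · rfl
      · rfl
      simp only [id_eq]
      ring
    exact (h1.add h2).sub h3
  have hK : fderiv ℝ D (t, x) (0, 1) (1, 0)
      = 2 * x * b + x ^ 2 * c + eps * b - (lam * a + lam * x * b) := by
    rw [← hKval.deriv]; exact hB.deriv
  -- derivative of s ↦ (∂ₓ f s x)²
  have hLHS1 : deriv (fun s => (deriv (f s) x) ^ 2) t
      = 2 * a * (2 * x * b + x ^ 2 * c + eps * b - (lam * a + lam * x * b)) := by
    have := (hu.fun_pow 2).deriv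
    rw [this, hK]
    push_cast
    try ring
  -- BSgen of ψ = (deriv φ)²
  have hψ1 : ∀ y, deriv (fun y => (deriv φ y) ^ 2) y = 2 * deriv φ y * deriv (deriv φ) y := by
    intro y
    have := ((hdb y).fun_pow 2).deriv
    rw [this]; push_cast; try ring
  have hψ2 : deriv (deriv (fun y => (deriv φ y) ^ 2)) x = 2 * (b * b + a * c) := by
    have e : deriv (fun y => (deriv φ y) ^ 2) = fun y => 2 * deriv φ y * deriv (deriv φ) y :=
      funext hψ1
    rw [e]
    have : HasDerivAt (fun y => 2 * deriv φ y * deriv (deriv φ) y)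
        (2 * b * b + 2 * a * c) x := by
      have := (((hdb x).const_mul 2).fun_mul (hdc x))
      convert this using 1
    rw [this.deriv]; ring
  have hBψ : BSgen lam eps (fun y => (deriv φ y) ^ 2) x
      = x ^ 2 * (2 * (b * b + a * c)) + eps * (2 * a * b) - lam * x * (2 * a * b) := by
    rw [BSgen, hψ2, hψ1 x]
  refine ⟨?_, ?_⟩
  · rw [hLHS1, hBψ]
    ring
  · intro hlam1
    set C := Real.exp (2 * (lam - 1) * t) with hCdef
    have hCpos : 0 < C := Real.exp_pos _
    -- time derivative
    have hE : HasDerivAt (fun s => Real.exp (2 * (lam - 1) * s)) (2 * (lam - 1) * C) t := by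
      have := ((hasDerivAt_id t).const_mul (2 * (lam - 1))).exp
      simpa [hCdef, mul_comm] using this
    have hLHS2 : deriv (fun s => Real.exp (2 * (lam - 1) * s) * (deriv (f s) x) ^ 2) t
        = 2 * (lam - 1) * C * a ^ 2
          + C * (2 * a * (2 * x * b + x ^ 2 * c + eps * b - (lam * a + lam * x * b))) := by
      have := (hE.fun_mul (hu.fun_pow 2)).deriv
      rw [this, hK]
      push_cast
      try ring
    -- BSgen of scaled function
    have hs1 : ∀ y, deriv (fun y => C * (deriv φ y) ^ 2) y
        = C * (2 * deriv φ y * deriv (deriv φ) y) := by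
      intro y
      have := (((hdb y).fun_pow 2).const_mul C).deriv
      rw [this]; push_cast; try ring
    have hs2 : deriv (deriv (fun y => C * (deriv φ y) ^ 2)) x
        = C * (2 * (b * b + a * c)) := by
      have e : deriv (fun y => C * (deriv φ y) ^ 2)
          = fun y => C * (2 * deriv φ y * deriv (deriv φ) y) := funext hs1
      rw [e]
      have : HasDerivAt (fun y => C * (2 * deriv φ y * deriv (deriv φ) y))
          (C * (2 * b * b + 2 * a * c)) x := by
        have := ((((hdb x).const_mul 2).fun_mul (hdc x))).const_mul C
        convert this using 1
      rw [this.deriv]; ring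
    have hBψ2 : BSgen lam eps (fun y => C * (deriv φ y) ^ 2) x
        = C * (x ^ 2 * (2 * (b * b + a * c)) + eps * (2 * a * b) - lam * x * (2 * a * b)) := by
      rw [BSgen, hs2, hs1 x]
      ring
    rw [hLHS2, hBψ2]
    have key : 2 * (lam - 1) * C * a ^ 2
          + C * (2 * a * (2 * x * b + x ^ 2 * c + eps * b - (lam * a + lam * x * b)))
          - C * (x ^ 2 * (2 * (b * b + a * c)) + eps * (2 * a * b) - lam * x * (2 * a * b))
        = -2 * C * (x * b - a) ^ 2 := by ring
    rw [key]
    nlinarith [sq_nonneg (x * b - a), hCpos]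
end
end

section
/- Let λ ≥ 0, ε ∈ ℝ, let (ε_j)_{j∈ℤᵈ} be positive reals with Σ_j ε_j < ∞, let G : ℤᵈ×ℤᵈ → ℝ satisfy Σ_k ε_k|G_{kj}| ≤ ξε_j for all j ∈ ℤᵈ with some ξ ∈ (0,∞), and let q_i : ℝ^{ℤᵈ} → ℝ (i ∈ ℤᵈ) be functions with Q := sup_i ‖q_i‖_∞ < ∞. Then for every configuration ω = (ω_k)_{k∈ℤᵈ} ∈ ℝ^{ℤᵈ} with Σ_k ε_k⟨ω_k⟩ < ∞, the series Σ_k ε_k [ ω_k²(1+ω_k²)^{−3/2} + (ε + q_k(ω))·ω_k(1+ω_k²)^{−1/2} − λω_k²(1+ω_k²)^{−1/2} + Σ_j G_{kj} ω_j ω_k (1+ω_k²)^{−1/2} ] converges absolutely and is bounded above by (λ + 1 + |ε| + Q)·Σ_j ε_j − (λ − ξ)·Σ_k ε_k⟨ω_k⟩. -/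
noncomputable section
open Real

lemma bs_t_pos (x : ℝ) : (0:ℝ) < 1 + x^2 := by positivity
lemma bs_t_ge_one (x : ℝ) : (1:ℝ) ≤ 1 + x^2 := by nlinarith [sq_nonneg x]

lemma bs_abs_le (x : ℝ) : |x| ≤ (1 + x^2) ^ ((1:ℝ)/2) := by
  rw [show ((1:ℝ)/2) = (1/2 : ℝ) by norm_num, ← Real.sqrt_eq_rpow, ← Real.sqrt_sq_eq_abs]
  exact Real.sqrt_le_sqrt (by nlinarith)

lemma bs_one_le (x : ℝ) : (1:ℝ) ≤ (1 + x^2) ^ ((1:ℝ)/2) := by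
  have h := Real.rpow_le_rpow (by norm_num : (0:ℝ) ≤ 1) (bs_t_ge_one x) (by norm_num : (0:ℝ) ≤ (1:ℝ)/2)
  simpa [Real.one_rpow] using h

lemma bs_term1 (x : ℝ) : x^2 * (1+x^2) ^ (-(3:ℝ)/2) ≤ 1 := by
  have ht := bs_t_pos x
  have hp : (0:ℝ) ≤ (1+x^2)^(-(3:ℝ)/2) := (Real.rpow_pos_of_pos ht _).le
  have h1 : x^2 * (1+x^2) ^ (-(3:ℝ)/2) ≤ (1+x^2) * (1+x^2)^(-(3:ℝ)/2) := by nlinarith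
  have h2 : (1+x^2) * (1+x^2)^(-(3:ℝ)/2) = (1+x^2)^(-(1:ℝ)/2) := by
    rw [show (1+x^2) * (1+x^2) ^ (-(3:ℝ)/2) = (1+x^2)^(1:ℝ) * (1+x^2)^(-(3:ℝ)/2) by rw [Real.rpow_one],
      ← Real.rpow_add ht]
    norm_num
  have h3 : (1+x^2)^(-(1:ℝ)/2) ≤ 1 :=
    Real.rpow_le_one_of_one_le_of_nonpos (bs_t_ge_one x) (by norm_num)
  linarith [h2 ▸ h1]

lemma bs_term2 (x : ℝ) : |x * (1+x^2) ^ (-(1:ℝ)/2)| ≤ 1 := by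
  have ht := bs_t_pos x
  have hp : (0:ℝ) < (1+x^2)^(-(1:ℝ)/2) := Real.rpow_pos_of_pos ht _
  rw [abs_mul, abs_of_pos hp]
  calc |x| * (1+x^2)^(-(1:ℝ)/2) ≤ (1+x^2)^((1:ℝ)/2) * (1+x^2)^(-(1:ℝ)/2) :=
        mul_le_mul_of_nonneg_right (bs_abs_le x) hp.le
    _ = 1 := by rw [← Real.rpow_add ht]; norm_num

lemma bs_term3 (x : ℝ) : x^2 * (1+x^2) ^ (-(1:ℝ)/2) = (1+x^2)^((1:ℝ)/2) - (1+x^2)^(-(1:ℝ)/2) := by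
  have h : (1+x^2) * (1+x^2) ^ (-(1:ℝ)/2) = (1+x^2) ^ ((1:ℝ)/2) := by
    rw [show (1+x^2) * (1+x^2) ^ (-(1:ℝ)/2) = (1+x^2)^(1:ℝ) * (1+x^2)^(-(1:ℝ)/2) by rw [Real.rpow_one],
      ← Real.rpow_add (bs_t_pos x)]
    norm_num
  nlinarith [h]

lemma bs_term3_lb (x : ℝ) : (1+x^2)^((1:ℝ)/2) - 1 ≤ x^2 * (1+x^2) ^ (-(1:ℝ)/2) := by
  rw [bs_term3]
  have : (1+x^2)^(-(1:ℝ)/2) ≤ 1 :=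
    Real.rpow_le_one_of_one_le_of_nonpos (bs_t_ge_one x) (by norm_num)
  linarith

lemma bs_term3_ub (x : ℝ) : x^2 * (1+x^2) ^ (-(1:ℝ)/2) ≤ (1+x^2)^((1:ℝ)/2) := by
  rw [bs_term3]
  have : (0:ℝ) < (1+x^2)^(-(1:ℝ)/2) := Real.rpow_pos_of_pos (bs_t_pos x) _
  linarith

lemma bs_A_ub (lam c x C0 : ℝ) (hlam : 0 ≤ lam) (hc : |c| ≤ C0) :
    x^2 * (1+x^2)^(-(3:ℝ)/2) + c * (x * (1+x^2)^(-(1:ℝ)/2)) - lam * x^2 * (1+x^2)^(-(1:ℝ)/2)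
      ≤ (1 + C0 + lam) - lam * (1+x^2)^((1:ℝ)/2) := by
  have h1 := bs_term1 x
  have h2 : c * (x * (1+x^2)^(-(1:ℝ)/2)) ≤ C0 := by
    calc c * (x * (1+x^2)^(-(1:ℝ)/2)) ≤ |c * (x * (1+x^2)^(-(1:ℝ)/2))| := le_abs_self _
      _ = |c| * |x * (1+x^2)^(-(1:ℝ)/2)| := abs_mul _ _
      _ ≤ C0 * 1 := mul_le_mul hc (bs_term2 x) (abs_nonneg _) ((abs_nonneg c).trans hc)
      _ = C0 := mul_one _
  have h3 : lam * ((1+x^2)^((1:ℝ)/2) - 1) ≤ lam * (x^2 * (1+x^2)^(-(1:ℝ)/2)) :=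
    mul_le_mul_of_nonneg_left (bs_term3_lb x) hlam
  nlinarith [h3]

lemma bs_A_abs (lam c x C0 : ℝ) (hlam : 0 ≤ lam) (hc : |c| ≤ C0) :
    |x^2 * (1+x^2)^(-(3:ℝ)/2) + c * (x * (1+x^2)^(-(1:ℝ)/2)) - lam * x^2 * (1+x^2)^(-(1:ℝ)/2)|
      ≤ (1 + C0 + lam) * (1+x^2)^((1:ℝ)/2) := by
  have h1 := bs_term1 x
  have h1' : (0:ℝ) ≤ x^2 * (1+x^2)^(-(3:ℝ)/2) := by positivity
  have h2 : |c * (x * (1+x^2)^(-(1:ℝ)/2))| ≤ C0 := by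
    calc |c * (x * (1+x^2)^(-(1:ℝ)/2))| = |c| * |x * (1+x^2)^(-(1:ℝ)/2)| := abs_mul _ _
      _ ≤ C0 * 1 := mul_le_mul hc (bs_term2 x) (abs_nonneg _) ((abs_nonneg c).trans hc)
      _ = C0 := mul_one _
  have h2' := abs_le.mp h2
  have h3 : lam * (x^2 * (1+x^2)^(-(1:ℝ)/2)) ≤ lam * (1+x^2)^((1:ℝ)/2) :=
    mul_le_mul_of_nonneg_left (bs_term3_ub x) hlam
  have h3' : (0:ℝ) ≤ lam * (x^2 * (1+x^2)^(-(1:ℝ)/2)) := by positivity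
  have h4 := bs_one_le x
  have hC0 : 0 ≤ C0 := (abs_nonneg c).trans hc
  rw [abs_le]
  constructor <;> nlinarith [h3, h3', h2'.1, h2'.2]
open Real
set_option maxHeartbeats 1000000 in

/-- Compactness estimate for the interacting infinite-dimensional B-S model: the formal
action of `𝓛 = Σ_j L_j + Σ_{j,i} G_{ij}x_j∂_i + Σ_i q_i∂_i` on the weighted Lyapunov
function `Σ_k ε_k⟨x_k⟩` converges absolutely and is bounded by
`(λ+1+|ε|+Q)Σ_j ε_j − (λ−ξ)Σ_k ε_k⟨ω_k⟩`. -/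
theorem BS_infinite_lyapunov (d : ℕ) (lam eps : ℝ) (hlam : 0 ≤ lam)
    (w : (Fin d → ℤ) → ℝ) (hw : ∀ j, 0 < w j) (hws : Summable w)
    (ξ : ℝ) (hξ : 0 < ξ)
    (G : (Fin d → ℤ) → (Fin d → ℤ) → ℝ)
    (hG : ∀ j, Summable (fun k => w k * |G k j|) ∧ (∑' k, w k * |G k j|) ≤ ξ * w j)
    (q : (Fin d → ℤ) → ((Fin d → ℤ) → ℝ) → ℝ) (Q : ℝ)
    (hQ : ∀ i ω, |q i ω| ≤ Q)
    (ω : (Fin d → ℤ) → ℝ)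
    (hω : Summable (fun k => w k * (1 + ω k ^ 2) ^ ((1 : ℝ) / 2))) :
    Summable (fun k =>
      w k * ((ω k) ^ 2 * (1 + ω k ^ 2) ^ (-(3 : ℝ) / 2)
        + (eps + q k ω) * (ω k * (1 + ω k ^ 2) ^ (-(1 : ℝ) / 2))
        - lam * (ω k) ^ 2 * (1 + ω k ^ 2) ^ (-(1 : ℝ) / 2))) ∧
    Summable (fun p : (Fin d → ℤ) × (Fin d → ℤ) =>
      w p.1 * (G p.1 p.2 * ω p.2 * ω p.1 * (1 + ω p.1 ^ 2) ^ (-(1 : ℝ) / 2))) ∧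
    (∑' k, w k * ((ω k) ^ 2 * (1 + ω k ^ 2) ^ (-(3 : ℝ) / 2)
        + (eps + q k ω) * (ω k * (1 + ω k ^ 2) ^ (-(1 : ℝ) / 2))
        - lam * (ω k) ^ 2 * (1 + ω k ^ 2) ^ (-(1 : ℝ) / 2)))
      + (∑' p : (Fin d → ℤ) × (Fin d → ℤ),
          w p.1 * (G p.1 p.2 * ω p.2 * ω p.1 * (1 + ω p.1 ^ 2) ^ (-(1 : ℝ) / 2)))
      ≤ (lam + 1 + |eps| + Q) * (∑' j, w j)
        - (lam - ξ) * ∑' k, w k * (1 + ω k ^ 2) ^ ((1 : ℝ) / 2) := by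
  set C0 : ℝ := |eps| + Q with hC0def
  have hQ0 : 0 ≤ Q := (abs_nonneg _).trans (hQ (fun _ => 0) ω)
  have hc : ∀ k, |eps + q k ω| ≤ C0 := fun k =>
    (abs_add_le _ _).trans (by have := hQ k ω; simp only [hC0def]; linarith)
  -- pointwise bounds
  have hAabs : ∀ k, |(ω k) ^ 2 * (1 + ω k ^ 2) ^ (-(3 : ℝ) / 2)
        + (eps + q k ω) * (ω k * (1 + ω k ^ 2) ^ (-(1 : ℝ) / 2))
        - lam * (ω k) ^ 2 * (1 + ω k ^ 2) ^ (-(1 : ℝ) / 2)|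
      ≤ (1 + C0 + lam) * (1 + ω k ^ 2) ^ ((1:ℝ)/2) :=
    fun k => bs_A_abs lam (eps + q k ω) (ω k) C0 hlam (hc k)
  -- part 1: summability of diagonal
  have hS1 : Summable (fun k =>
      w k * ((ω k) ^ 2 * (1 + ω k ^ 2) ^ (-(3 : ℝ) / 2)
        + (eps + q k ω) * (ω k * (1 + ω k ^ 2) ^ (-(1 : ℝ) / 2))
        - lam * (ω k) ^ 2 * (1 + ω k ^ 2) ^ (-(1 : ℝ) / 2))) := by
    apply Summable.of_norm_bounded (g := fun k => (1 + C0 + lam) * (w k * (1 + ω k ^ 2) ^ ((1:ℝ)/2)))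
      (hω.mul_left _)
    intro k
    rw [Real.norm_eq_abs, abs_mul, abs_of_pos (hw k)]
    calc w k * |_| ≤ w k * ((1 + C0 + lam) * (1 + ω k ^ 2) ^ ((1:ℝ)/2)) :=
          mul_le_mul_of_nonneg_left (hAabs k) (hw k).le
      _ = (1 + C0 + lam) * (w k * (1 + ω k ^ 2) ^ ((1:ℝ)/2)) := by ring
  -- majorant for the pair series
  have hHs_nonneg : ∀ p : (Fin d → ℤ) × (Fin d → ℤ),
      0 ≤ w p.2 * |G p.2 p.1| * (1 + ω p.1 ^ 2) ^ ((1:ℝ)/2) := fun p => by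
    have h := (hw p.2).le
    positivity
  have hHs_fiber : ∀ j, Summable (fun k => w k * |G k j| * (1 + ω j ^ 2) ^ ((1:ℝ)/2)) :=
    fun j => (hG j).1.mul_right _
  have hHs_sum_le : ∀ j, (∑' k, w k * |G k j| * (1 + ω j ^ 2) ^ ((1:ℝ)/2))
      ≤ ξ * (w j * (1 + ω j ^ 2) ^ ((1:ℝ)/2)) := by
    intro j
    rw [tsum_mul_right]
    calc (∑' k, w k * |G k j|) * (1 + ω j ^ 2) ^ ((1:ℝ)/2)
        ≤ (ξ * w j) * (1 + ω j ^ 2) ^ ((1:ℝ)/2) :=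
          mul_le_mul_of_nonneg_right (hG j).2 (by positivity)
      _ = ξ * (w j * (1 + ω j ^ 2) ^ ((1:ℝ)/2)) := by ring
  have hHs : Summable (fun p : (Fin d → ℤ) × (Fin d → ℤ) =>
      w p.2 * |G p.2 p.1| * (1 + ω p.1 ^ 2) ^ ((1:ℝ)/2)) := by
    rw [summable_prod_of_nonneg hHs_nonneg]
    exact ⟨hHs_fiber, Summable.of_nonneg_of_le
      (fun j => tsum_nonneg (fun k => hHs_nonneg (j, k))) hHs_sum_le (hω.mul_left ξ)⟩
  have hH : Summable (fun p : (Fin d → ℤ) × (Fin d → ℤ) =>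
      w p.1 * |G p.1 p.2| * (1 + ω p.2 ^ 2) ^ ((1:ℝ)/2)) :=
    (Equiv.prodComm (Fin d → ℤ) (Fin d → ℤ)).summable_iff.mpr hHs
  have hFbound : ∀ p : (Fin d → ℤ) × (Fin d → ℤ),
      ‖w p.1 * (G p.1 p.2 * ω p.2 * ω p.1 * (1 + ω p.1 ^ 2) ^ (-(1 : ℝ) / 2))‖
        ≤ w p.1 * |G p.1 p.2| * (1 + ω p.2 ^ 2) ^ ((1:ℝ)/2) := by
    intro p
    rw [Real.norm_eq_abs, abs_mul, abs_of_pos (hw p.1)]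
    have h1 : |G p.1 p.2 * ω p.2 * ω p.1 * (1 + ω p.1 ^ 2) ^ (-(1 : ℝ) / 2)|
        = |G p.1 p.2| * |ω p.2| * |ω p.1 * (1 + ω p.1 ^ 2) ^ (-(1 : ℝ) / 2)| := by
      rw [mul_assoc (G p.1 p.2 * ω p.2), abs_mul, abs_mul]
    have h2 := bs_term2 (ω p.1)
    have h3 := bs_abs_le (ω p.2)
    have h4 : |G p.1 p.2| * |ω p.2| * |ω p.1 * (1 + ω p.1 ^ 2) ^ (-(1 : ℝ) / 2)|
        ≤ |G p.1 p.2| * (1 + ω p.2 ^ 2) ^ ((1:ℝ)/2) := by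
      calc |G p.1 p.2| * |ω p.2| * |ω p.1 * (1 + ω p.1 ^ 2) ^ (-(1 : ℝ) / 2)|
          ≤ |G p.1 p.2| * |ω p.2| * 1 :=
            mul_le_mul_of_nonneg_left h2 (by positivity)
        _ = |G p.1 p.2| * |ω p.2| := mul_one _
        _ ≤ |G p.1 p.2| * (1 + ω p.2 ^ 2) ^ ((1:ℝ)/2) :=
            mul_le_mul_of_nonneg_left h3 (abs_nonneg _)
    calc w p.1 * |G p.1 p.2 * ω p.2 * ω p.1 * (1 + ω p.1 ^ 2) ^ (-(1 : ℝ) / 2)|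
        = w p.1 * (|G p.1 p.2| * |ω p.2| * |ω p.1 * (1 + ω p.1 ^ 2) ^ (-(1 : ℝ) / 2)|) := by
          rw [h1]
      _ ≤ w p.1 * (|G p.1 p.2| * (1 + ω p.2 ^ 2) ^ ((1:ℝ)/2)) :=
          mul_le_mul_of_nonneg_left h4 (hw p.1).le
      _ = w p.1 * |G p.1 p.2| * (1 + ω p.2 ^ 2) ^ ((1:ℝ)/2) := by ring
  have hS2 : Summable (fun p : (Fin d → ℤ) × (Fin d → ℤ) =>
      w p.1 * (G p.1 p.2 * ω p.2 * ω p.1 * (1 + ω p.1 ^ 2) ^ (-(1 : ℝ) / 2))) :=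
    Summable.of_norm_bounded hH hFbound
  refine ⟨hS1, hS2, ?_⟩
  have hRHS1 : Summable (fun k => (1 + C0 + lam) * w k
      - lam * (w k * (1 + ω k ^ 2) ^ ((1:ℝ)/2))) :=
    (hws.mul_left _).sub (hω.mul_left lam)
  have hT1 : (∑' k, w k * ((ω k) ^ 2 * (1 + ω k ^ 2) ^ (-(3 : ℝ) / 2)
        + (eps + q k ω) * (ω k * (1 + ω k ^ 2) ^ (-(1 : ℝ) / 2))
        - lam * (ω k) ^ 2 * (1 + ω k ^ 2) ^ (-(1 : ℝ) / 2)))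
      ≤ (1 + C0 + lam) * (∑' j, w j)
        - lam * ∑' k, w k * (1 + ω k ^ 2) ^ ((1:ℝ)/2) := by
    have hle : ∀ k, w k * ((ω k) ^ 2 * (1 + ω k ^ 2) ^ (-(3 : ℝ) / 2)
        + (eps + q k ω) * (ω k * (1 + ω k ^ 2) ^ (-(1 : ℝ) / 2))
        - lam * (ω k) ^ 2 * (1 + ω k ^ 2) ^ (-(1 : ℝ) / 2))
        ≤ (1 + C0 + lam) * w k - lam * (w k * (1 + ω k ^ 2) ^ ((1:ℝ)/2)) := by
      intro k
      have h := mul_le_mul_of_nonneg_left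
        (bs_A_ub lam (eps + q k ω) (ω k) C0 hlam (hc k)) (hw k).le
      nlinarith [h]
    calc (∑' k, w k * ((ω k) ^ 2 * (1 + ω k ^ 2) ^ (-(3 : ℝ) / 2)
          + (eps + q k ω) * (ω k * (1 + ω k ^ 2) ^ (-(1 : ℝ) / 2))
          - lam * (ω k) ^ 2 * (1 + ω k ^ 2) ^ (-(1 : ℝ) / 2)))
        ≤ ∑' k, ((1 + C0 + lam) * w k - lam * (w k * (1 + ω k ^ 2) ^ ((1:ℝ)/2))) :=
          Summable.tsum_le_tsum hle hS1 hRHS1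
      _ = (1 + C0 + lam) * (∑' j, w j)
          - lam * ∑' k, w k * (1 + ω k ^ 2) ^ ((1:ℝ)/2) := by
          rw [Summable.tsum_sub (hws.mul_left _) (hω.mul_left lam), tsum_mul_left, tsum_mul_left]
  have hT2 : (∑' p : (Fin d → ℤ) × (Fin d → ℤ),
        w p.1 * (G p.1 p.2 * ω p.2 * ω p.1 * (1 + ω p.1 ^ 2) ^ (-(1 : ℝ) / 2)))
      ≤ ξ * ∑' k, w k * (1 + ω k ^ 2) ^ ((1:ℝ)/2) := by
    have step1 : (∑' p : (Fin d → ℤ) × (Fin d → ℤ),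
          w p.1 * (G p.1 p.2 * ω p.2 * ω p.1 * (1 + ω p.1 ^ 2) ^ (-(1 : ℝ) / 2)))
        ≤ ∑' p : (Fin d → ℤ) × (Fin d → ℤ),
          w p.1 * |G p.1 p.2| * (1 + ω p.2 ^ 2) ^ ((1:ℝ)/2) :=
      Summable.tsum_le_tsum (fun p => (le_abs_self _).trans
        ((Real.norm_eq_abs _) ▸ hFbound p)) hS2 hH
    have step2 : (∑' p : (Fin d → ℤ) × (Fin d → ℤ),
          w p.1 * |G p.1 p.2| * (1 + ω p.2 ^ 2) ^ ((1:ℝ)/2))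
        = ∑' p : (Fin d → ℤ) × (Fin d → ℤ),
          w p.2 * |G p.2 p.1| * (1 + ω p.1 ^ 2) ^ ((1:ℝ)/2) :=
      Equiv.tsum_eq (Equiv.prodComm (Fin d → ℤ) (Fin d → ℤ))
        (fun p => w p.2 * |G p.2 p.1| * (1 + ω p.1 ^ 2) ^ ((1:ℝ)/2))
    have step3 : (∑' p : (Fin d → ℤ) × (Fin d → ℤ),
          w p.2 * |G p.2 p.1| * (1 + ω p.1 ^ 2) ^ ((1:ℝ)/2))
        = ∑' j, ∑' k, w k * |G k j| * (1 + ω j ^ 2) ^ ((1:ℝ)/2) :=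
      Summable.tsum_prod' hHs hHs_fiber
    have step4 : (∑' j, ∑' k, w k * |G k j| * (1 + ω j ^ 2) ^ ((1:ℝ)/2))
        ≤ ∑' j, ξ * (w j * (1 + ω j ^ 2) ^ ((1:ℝ)/2)) :=
      Summable.tsum_le_tsum hHs_sum_le ((summable_prod_of_nonneg hHs_nonneg).mp hHs).2 (hω.mul_left ξ)
    have step5 : (∑' j, ξ * (w j * (1 + ω j ^ 2) ^ ((1:ℝ)/2)))
        = ξ * ∑' k, w k * (1 + ω k ^ 2) ^ ((1:ℝ)/2) := tsum_mul_left
    linarith [step1, step2 ▸ step3 ▸ step4, step5 ▸ step4]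
  have hfinal : (1 + C0 + lam) * (∑' j, w j)
        - lam * (∑' k, w k * (1 + ω k ^ 2) ^ ((1:ℝ)/2))
        + ξ * (∑' k, w k * (1 + ω k ^ 2) ^ ((1:ℝ)/2))
      = (lam + 1 + |eps| + Q) * (∑' j, w j)
        - (lam - ξ) * ∑' k, w k * (1 + ω k ^ 2) ^ ((1:ℝ)/2) := by
    simp only [hC0def]; ring
  linarith [hT1, hT2]
end
end
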